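/- Assume X₁,…,X_d and H are Hermitian n×n complex matrices, that the X_j commute with each other, and that Z = √(X₁² + ⋯ + X_d²) is invertible. If H₀ is Hermitian and ‖Z⁻¹(HH₀ + H₀H + H₀²)Z⁻¹‖ ≤ C for some constant C with 0 ≤ C < 1, then (1−C)^{1/2} · μ^Q₀(X₁,…,X_d,H) ≤ μ^Q₀(X₁,…,X_d,H+H₀) ≤ (1+C)^{1/2} · μ^Q₀(X₁,…,X_d,H). -/

import Mathlib

open Matrix
open scoped ComplexOrder

/-- The smallest real eigenvalue of a matrix: for a Hermitian matrix this is the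
smallest eigenvalue. -/
noncomputable def minEig {m : Type*} [Fintype m] [DecidableEq m] (A : Matrix m m ℂ) : ℝ :=
  sInf {c : ℝ | (c : ℂ) ∈ spectrum ℂ A}

/-- The ℓ²-induced operator norm of a square matrix. -/
noncomputable def opNorm {m : Type*} [Fintype m] [DecidableEq m] (A : Matrix m m ℂ) : ℝ :=
  ‖Matrix.toEuclideanCLM (𝕜 := ℂ) A‖

section Aux
variable {n : ℕ}

lemma minEig_eq_sInf_spectrumReal (A : Matrix (Fin n) (Fin n) ℂ) :
    minEig A = sInf (spectrum ℝ A) := by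
  unfold minEig
  congr 1

lemma spectrumReal_finite {A : Matrix (Fin n) (Fin n) ℂ} (hA : A.IsHermitian) :
    (spectrum ℝ A).Finite := by
  rw [hA.spectrum_real_eq_range_eigenvalues]
  exact Set.finite_range _

lemma spectrumReal_nonempty (hn : 0 < n) {A : Matrix (Fin n) (Fin n) ℂ}
    (hA : A.IsHermitian) : (spectrum ℝ A).Nonempty := by
  rw [hA.spectrum_real_eq_range_eigenvalues]
  exact Set.range_nonempty_iff_nonempty.mpr (Fin.pos_iff_nonempty.mp hn)

lemma minEig_le {A : Matrix (Fin n) (Fin n) ℂ} (hA : A.IsHermitian)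
    {x : ℝ} (hx : x ∈ spectrum ℝ A) : minEig A ≤ x := by
  rw [minEig_eq_sInf_spectrumReal]
  exact csInf_le (spectrumReal_finite hA).bddBelow hx

lemma le_minEig (hn : 0 < n) {A : Matrix (Fin n) (Fin n) ℂ} (hA : A.IsHermitian)
    {c : ℝ} (h : ∀ x ∈ spectrum ℝ A, c ≤ x) : c ≤ minEig A := by
  rw [minEig_eq_sInf_spectrumReal]
  exact le_csInf (spectrumReal_nonempty hn hA) h

lemma posSemidef_iff_spectrum {A : Matrix (Fin n) (Fin n) ℂ} (hA : A.IsHermitian) :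
    A.PosSemidef ↔ ∀ x ∈ spectrum ℝ A, 0 ≤ x := by
  constructor
  · intro h x hx
    rw [hA.spectrum_real_eq_range_eigenvalues] at hx
    obtain ⟨i, rfl⟩ := hx
    exact h.eigenvalues_nonneg i
  · intro h
    exact hA.posSemidef_iff_eigenvalues_nonneg.mpr fun i => h _ (hA.eigenvalues_mem_spectrum_real i)

lemma isHermitian_algebraMap (c : ℝ) :
    (algebraMap ℝ (Matrix (Fin n) (Fin n) ℂ) c).IsHermitian := by
  unfold Matrix.IsHermitian
  rw [Algebra.algebraMap_eq_smul_one, Matrix.conjTranspose_smul, Matrix.conjTranspose_one,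
    star_trivial]

end Aux

section Aux2
variable {n : ℕ}

lemma isHermitian_real_smul {A : Matrix (Fin n) (Fin n) ℂ} (hA : A.IsHermitian) (c : ℝ) :
    (c • A).IsHermitian := by
  unfold Matrix.IsHermitian
  rw [Matrix.conjTranspose_smul, star_trivial, hA.eq]

lemma minEig_mono (hn : 0 < n) {A B : Matrix (Fin n) (Fin n) ℂ}
    (hA : A.IsHermitian) (hB : B.IsHermitian) (h : (B - A).PosSemidef) :
    minEig A ≤ minEig B := by
  set c := minEig A with hc
  have hAc : (A - algebraMap ℝ _ c).PosSemidef := by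
    rw [posSemidef_iff_spectrum (hA.sub (isHermitian_algebraMap c))]
    intro x hx
    rw [← spectrum.sub_singleton_eq] at hx
    obtain ⟨y, hy, z, hz, rfl⟩ := hx
    rw [Set.mem_singleton_iff] at hz
    subst hz
    have := minEig_le hA hy
    show (0:ℝ) ≤ y - c
    linarith
  have hBc : (B - algebraMap ℝ _ c).PosSemidef := by
    have e : B - algebraMap ℝ _ c = (B - A) + (A - algebraMap ℝ _ c) := by abel
    rw [e]; exact h.add hAc
  apply le_minEig hn hB
  intro x hx
  have hmem : x - c ∈ spectrum ℝ (B - algebraMap ℝ (Matrix (Fin n) (Fin n) ℂ) c) := by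
    rw [← spectrum.sub_singleton_eq]
    exact Set.sub_mem_sub hx rfl
  have := (posSemidef_iff_spectrum (hB.sub (isHermitian_algebraMap c))).mp hBc _ hmem
  linarith



open Pointwise in
lemma minEig_smul {t : ℝ} (ht : 0 < t) (A : Matrix (Fin n) (Fin n) ℂ) :
    minEig (t • A) = t * minEig A := by
  rw [minEig_eq_sInf_spectrumReal, minEig_eq_sInf_spectrumReal]
  have h : spectrum ℝ (t • A) = t • spectrum ℝ A := by
    have := spectrum.unit_smul_eq_smul (R := ℝ) (A := Matrix (Fin n) (Fin n) ℂ) A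
      (Units.mk0 t ht.ne')
    simpa [Units.smul_def] using this
  rw [h, Real.sInf_smul_of_nonneg ht.le, smul_eq_mul]

lemma posSemidef_smul_one_sub {M : Matrix (Fin n) (Fin n) ℂ} (hM : M.IsHermitian) {C : ℝ}
    (hC0 : 0 ≤ C) (h : ‖Matrix.toEuclideanCLM (𝕜 := ℂ) M‖ ≤ C) :
    ((C • (1 : Matrix (Fin n) (Fin n) ℂ)) - M).PosSemidef ∧
      ((C • (1 : Matrix (Fin n) (Fin n) ℂ)) + M).PosSemidef := by
  set T := Matrix.toEuclideanCLM (𝕜 := ℂ) M with hT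
  have hone : ((C : ℝ) • (1 : Matrix (Fin n) (Fin n) ℂ)).IsHermitian :=
    isHermitian_real_smul Matrix.isHermitian_one C
  have key : ∀ x : Fin n → ℂ,
      ∃ r s : ℝ, 0 ≤ s ∧ |r| ≤ C * s ∧
        dotProduct (star x) (M *ᵥ x) = (r : ℂ) ∧ dotProduct (star x) x = (s : ℂ) := by
    intro x
    set y : EuclideanSpace ℂ (Fin n) := (WithLp.equiv 2 _).symm x with hy
    have hinner : dotProduct (star x) (M *ᵥ x) = @inner ℂ _ _ y (T y) := dotProduct_comm _ _
    have hsa : _root_.IsSelfAdjoint T := by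
      have h1 : Matrix.toEuclideanCLM (𝕜 := ℂ) (star M) = star T :=
        map_star _ M
      show star T = T
      rw [← h1, Matrix.star_eq_conjTranspose, hM.eq, hT]
    have hreal : (starRingEnd ℂ) (@inner ℂ _ _ y (T y)) = @inner ℂ _ _ y (T y) :=
      (inner_conj_symm _ _).trans (hsa.isSymmetric y y)
    refine ⟨(@inner ℂ _ _ y (T y)).re, ‖y‖ ^ 2, by positivity, ?_, ?_, ?_⟩
    · calc |(@inner ℂ _ _ y (T y)).re| ≤ ‖@inner ℂ _ _ y (T y)‖ :=
            Complex.abs_re_le_norm _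
        _ = ‖@inner ℂ _ _ y (T y)‖ := rfl
        _ ≤ ‖y‖ * ‖T y‖ := norm_inner_le_norm y (T y)
        _ ≤ ‖y‖ * (‖T‖ * ‖y‖) := by
            gcongr
            exact T.le_opNorm y
        _ ≤ ‖y‖ * (C * ‖y‖) := by
            gcongr
        _ = C * ‖y‖ ^ 2 := by ring
    · rw [hinner, (Complex.conj_eq_iff_re.mp hreal)]
    · have : dotProduct (star x) x = @inner ℂ _ _ y y := by
        exact dotProduct_comm _ _
      rw [this, inner_self_eq_norm_sq_to_K]
      norm_cast
  constructor
  · refine .of_dotProduct_mulVec_nonneg (hone.sub hM) fun x => ?_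
    obtain ⟨r, s, hs0, hrs, hr, hs⟩ := key x
    rw [Matrix.sub_mulVec, dotProduct_sub, Matrix.smul_mulVec,
      Matrix.one_mulVec, dotProduct_smul, hr, hs]
    have : C • ((s:ℝ):ℂ) - (r:ℂ) = (((C * s - r : ℝ)):ℂ) := by
      push_cast [Complex.real_smul]
      ring
    rw [this]
    rw [Complex.zero_le_real]
    have := abs_le.mp hrs
    linarith
  · refine .of_dotProduct_mulVec_nonneg (hone.add hM) fun x => ?_
    obtain ⟨r, s, hs0, hrs, hr, hs⟩ := key x
    rw [Matrix.add_mulVec, dotProduct_add, Matrix.smul_mulVec,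
      Matrix.one_mulVec, dotProduct_smul, hr, hs]
    have : C • ((s:ℝ):ℂ) + (r:ℂ) = (((C * s + r : ℝ)):ℂ) := by
      push_cast [Complex.real_smul]
      ring
    rw [this]
    rw [Complex.zero_le_real]
    have := abs_le.mp hrs
    linarith

end Aux2


lemma posSemidef_real_smul {n : ℕ} {A : Matrix (Fin n) (Fin n) ℂ} (hA : A.PosSemidef)
    {c : ℝ} (hc : 0 ≤ c) : (c • A).PosSemidef :=
  .of_dotProduct_mulVec_nonneg (isHermitian_real_smul hA.1 c) fun x => by
    rw [Matrix.smul_mulVec, dotProduct_smul, Complex.real_smul]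
    exact mul_nonneg (by exact_mod_cast hc) (hA.dotProduct_mulVec_nonneg x)

/-- with commuting Hermitian `X₁,…,X_d`, Hermitian `H`, `Z` the
invertible positive semidefinite square root of `Σ_j X_j²`, and Hermitian `H₀`
satisfying `‖Z⁻¹(HH₀ + H₀H + H₀²)Z⁻¹‖ ≤ C < 1`, the quadratic gaps at the
origin satisfy
`(1−C)^{1/2} μ^Q₀(X,H) ≤ μ^Q₀(X,H+H₀) ≤ (1+C)^{1/2} μ^Q₀(X,H)`. -/
theorem quadratic_gap_truncation_bound {n d : ℕ} (hn : 0 < n)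
    (X : Fin d → Matrix (Fin n) (Fin n) ℂ) (hX : ∀ j, (X j).IsHermitian)
    (hXcomm : ∀ j k, X j * X k = X k * X j)
    (H : Matrix (Fin n) (Fin n) ℂ) (hH : H.IsHermitian)
    (Z : Matrix (Fin n) (Fin n) ℂ) (hZpsd : Z.PosSemidef)
    (hZsq : Z ^ 2 = ∑ j, (X j) ^ 2) (hZinv : IsUnit Z)
    (H₀ : Matrix (Fin n) (Fin n) ℂ) (hH₀ : H₀.IsHermitian)
    (C : ℝ) (hC0 : 0 ≤ C) (hC1 : C < 1)
    (hC : opNorm (Z⁻¹ * (H * H₀ + H₀ * H + H₀ ^ 2) * Z⁻¹) ≤ C) :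
    Real.sqrt (1 - C) * Real.sqrt (minEig (∑ j, (X j) ^ 2 + H ^ 2)) ≤
        Real.sqrt (minEig (∑ j, (X j) ^ 2 + (H + H₀) ^ 2)) ∧
      Real.sqrt (minEig (∑ j, (X j) ^ 2 + (H + H₀) ^ 2)) ≤
        Real.sqrt (1 + C) * Real.sqrt (minEig (∑ j, (X j) ^ 2 + H ^ 2)) := by
  classical
  have hdet : IsUnit Z.det := (Matrix.isUnit_iff_isUnit_det Z).mp hZinv
  have hZZ : Z * Z⁻¹ = 1 := Matrix.mul_nonsing_inv Z hdet
  have hZZ' : Z⁻¹ * Z = 1 := Matrix.nonsing_inv_mul Z hdet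
  set S : Matrix (Fin n) (Fin n) ℂ := ∑ j, (X j) ^ 2 with hSdef
  have hSherm : S.IsHermitian := by
    have h2 : (Z ^ 2).IsHermitian := hZpsd.1.pow 2
    rwa [hZsq] at h2
  set E : Matrix (Fin n) (Fin n) ℂ := H * H₀ + H₀ * H + H₀ ^ 2 with hEdef
  have hEherm : E.IsHermitian := by
    show Eᴴ = E
    rw [hEdef]
    simp only [Matrix.conjTranspose_add, Matrix.conjTranspose_mul, Matrix.conjTranspose_pow,
      hH.eq, hH₀.eq]
    abel
  have hZinvherm : (Z⁻¹).IsHermitian := hZpsd.1.inv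
  set M : Matrix (Fin n) (Fin n) ℂ := Z⁻¹ * E * Z⁻¹ with hMdef
  have hMherm : M.IsHermitian := by
    have := Matrix.isHermitian_conjTranspose_mul_mul Z⁻¹ hEherm
    rwa [hZinvherm.eq] at this
  have hnorm : ‖Matrix.toEuclideanCLM (𝕜 := ℂ) M‖ ≤ C := hC
  obtain ⟨hPSDsub, hPSDadd⟩ := posSemidef_smul_one_sub hMherm hC0 hnorm
  have hconj : ∀ {N : Matrix (Fin n) (Fin n) ℂ}, N.PosSemidef → (Z * N * Z).PosSemidef := by
    intro N hN
    have := hN.mul_mul_conjTranspose_same Z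
    rwa [hZpsd.1.eq] at this
  have hZMZ : Z * M * Z = E := by
    rw [hMdef]
    calc Z * (Z⁻¹ * E * Z⁻¹) * Z = (Z * Z⁻¹) * E * (Z⁻¹ * Z) := by
          noncomm_ring
      _ = E := by rw [hZZ, hZZ', one_mul, mul_one]
  have hexp : ∀ c : ℝ, Z * (c • (1 : Matrix (Fin n) (Fin n) ℂ)) * Z = c • (Z ^ 2) := by
    intro c
    rw [Matrix.mul_smul, Matrix.smul_mul, mul_one, ← pow_two]
  have h1 : (C • S - E).PosSemidef := by
    have := hconj hPSDsub
    rwa [Matrix.mul_sub, Matrix.sub_mul, hexp C, hZMZ, hZsq] at this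
  have h2 : (C • S + E).PosSemidef := by
    have := hconj hPSDadd
    rwa [Matrix.mul_add, Matrix.add_mul, hexp C, hZMZ, hZsq] at this
  have hH2 : (H ^ 2).PosSemidef := by
    have := Matrix.posSemidef_conjTranspose_mul_self H
    rwa [hH.eq, ← pow_two] at this
  have hCH2 : (C • (H ^ 2)).PosSemidef := posSemidef_real_smul hH2 hC0
  have hQherm : (S + H ^ 2).IsHermitian := hSherm.add (hH.pow 2)
  have hQ'herm : (S + (H + H₀) ^ 2).IsHermitian := hSherm.add ((hH.add hH₀).pow 2)
  have hQQ' : S + (H + H₀) ^ 2 = (S + H ^ 2) + E := by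
    have hsq : (H + H₀) ^ 2 = H ^ 2 + (H * H₀ + H₀ * H + H₀ ^ 2) := by noncomm_ring
    rw [hsq, hEdef]
    abel
  have key1 : ((S + (H + H₀) ^ 2) - (1 - C) • (S + H ^ 2)).PosSemidef := by
    have e : (S + (H + H₀) ^ 2) - (1 - C) • (S + H ^ 2) = (C • S + E) + C • (H ^ 2) := by
      rw [hQQ']
      module
    rw [e]
    exact h2.add hCH2
  have key2 : ((1 + C) • (S + H ^ 2) - (S + (H + H₀) ^ 2)).PosSemidef := by
    have e : (1 + C) • (S + H ^ 2) - (S + (H + H₀) ^ 2) = (C • S - E) + C • (H ^ 2) := by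
      rw [hQQ']
      module
    rw [e]
    exact h1.add hCH2
  have hm1 : (1 - C) * minEig (S + H ^ 2) ≤ minEig (S + (H + H₀) ^ 2) := by
    rw [← minEig_smul (by linarith : (0:ℝ) < 1 - C) (S + H ^ 2)]
    exact minEig_mono hn (isHermitian_real_smul hQherm _) hQ'herm key1
  have hm2 : minEig (S + (H + H₀) ^ 2) ≤ (1 + C) * minEig (S + H ^ 2) := by
    rw [← minEig_smul (by linarith : (0:ℝ) < 1 + C) (S + H ^ 2)]
    exact minEig_mono hn hQ'herm (isHermitian_real_smul hQherm _) key2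
  constructor
  · rw [← Real.sqrt_mul (by linarith : (0:ℝ) ≤ 1 - C)]
    exact Real.sqrt_le_sqrt hm1
  · rw [← Real.sqrt_mul (by linarith : (0:ℝ) ≤ 1 + C)]
    exact Real.sqrt_le_sqrt hm2
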